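/- Let φ be a finite potent endomorphism of V with index r ≥ 2. Then there exist at least two distinct G-Drazin inverses of φ; in particular the G-Drazin inverse is not unique. -/

import Mathlib

/-- A finite potent endomorphism of index `r ≥ 2` has at least two distinct
G-Drazin inverses. -/
theorem stmt18 {k V : Type*} [Field k] [AddCommGroup V] [Module k V]
    (φ : Module.End k V) (U W : Submodule k V) (r : ℕ) (hr : 2 ≤ r)
    (hcompl : IsCompl U W)
    (hUinv : ∀ u ∈ U, φ u ∈ U) (hWinv : ∀ w ∈ W, φ w ∈ W)
    (hfin : FiniteDimensional k W)
    (hnil : ∀ u ∈ U, (φ ^ r) u = 0)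
    (hmin : ∀ s < r, ∃ u ∈ U, (φ ^ s) u ≠ 0)
    (hWsurj : ∀ w ∈ W, ∃ w' ∈ W, φ w' = w)
    (hWinj : ∀ w ∈ W, φ w = 0 → w = 0) :
    ∃ ψ₁ ψ₂ : Module.End k V,
      (φ * ψ₁ * φ = φ ∧ ψ₁ * φ ^ r = φ ^ r * ψ₁) ∧
      (φ * ψ₂ * φ = φ ∧ ψ₂ * φ ^ r = φ ^ r * ψ₂) ∧ ψ₁ ≠ ψ₂ := by
  classical
  -- powers preserve U and W
  have hUpow : ∀ s, ∀ u ∈ U, (φ ^ s) u ∈ U := by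
    intro s
    induction s with
    | zero => intro u hu; simpa using hu
    | succ n ih =>
      intro u hu
      rw [pow_succ, Module.End.mul_apply]
      exact ih _ (hUinv u hu)
  have hWpow : ∀ s, ∀ w ∈ W, (φ ^ s) w ∈ W := by
    intro s
    induction s with
    | zero => intro w hw; simpa using hw
    | succ n ih =>
      intro w hw
      rw [pow_succ, Module.End.mul_apply]
      exact ih _ (hWinv w hw)
  -- restrictions of φ
  set φU : U →ₗ[k] U := φ.restrict hUinv with hφU
  set φW : W →ₗ[k] W := φ.restrict hWinv with hφW
  have hφUcoe : ∀ x : U, (φU x : V) = φ x := fun x => rfl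
  have hφWcoe : ∀ x : W, (φW x : V) = φ x := fun x => rfl
  have hWbij : Function.Bijective φW := by
    constructor
    · intro x y hxy
      have : φ ((x : V) - y) = 0 := by
        rw [map_sub, sub_eq_zero]
        rw [← hφWcoe, ← hφWcoe, hxy]
      have := hWinj _ (Submodule.sub_mem W x.2 y.2) this
      exact Subtype.ext (by rwa [sub_eq_zero] at this)
    · intro y
      obtain ⟨w', hw', hww⟩ := hWsurj y y.2
      exact ⟨⟨w', hw'⟩, Subtype.ext hww⟩
  set e : W ≃ₗ[k] W := LinearEquiv.ofBijective φW hWbij with he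
  -- inner inverse of φU
  obtain ⟨K, hK⟩ := Submodule.exists_isCompl (LinearMap.ker φU)
  have hker : LinearMap.ker (φU.comp K.subtype) = ⊥ := by
    rw [LinearMap.ker_eq_bot']
    intro x hx
    have hx' : (x : U) ∈ LinearMap.ker φU := hx
    have := hK.disjoint.le_bot ⟨hx', x.2⟩
    exact Subtype.ext this
  obtain ⟨h, hh⟩ := (φU.comp K.subtype).exists_leftInverse_of_injective hker
  set ψU : U →ₗ[k] U := K.subtype.comp h with hψU
  have hψUkey : ∀ u : U, φU (ψU (φU u)) = φU u := by
    intro u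
    have hmem : (u : U) ∈ (LinearMap.ker φU) ⊔ K := by rw [hK.sup_eq_top]; trivial
    obtain ⟨n, hn, c, hc, hnc⟩ := Submodule.mem_sup.1 hmem
    have h1 : φU u = φU c := by
      rw [← hnc, map_add, LinearMap.mem_ker.1 hn, zero_add]
    have h2 : ψU (φU c) = c := by
      have := LinearMap.ext_iff.1 hh ⟨c, hc⟩
      simpa [hψU] using congrArg (K.subtype) this
    rw [h1, h2]
  -- assemble ψ
  set πU : V →ₗ[k] U := Submodule.projectionOnto U W hcompl with hπU
  set πW : V →ₗ[k] W := Submodule.projectionOnto W U hcompl.symm with hπW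
  set ψ : Module.End k V :=
    U.subtype.comp (ψU.comp πU) + W.subtype.comp ((e.symm : W →ₗ[k] W).comp πW) with hψ
  have hψonU : ∀ u (hu : u ∈ U), ψ u = ↑(ψU ⟨u, hu⟩) := by
    intro u hu
    simp [hψ, hπU, hπW, Submodule.projectionOnto_apply_left hcompl ⟨u, hu⟩,
      Submodule.projectionOnto_apply_right hcompl.symm ⟨u, hu⟩]
  have hψonW : ∀ w (hw : w ∈ W), ψ w = ↑(e.symm ⟨w, hw⟩) := by
    intro w hw
    simp [hψ, hπU, hπW, Submodule.projectionOnto_apply_left hcompl.symm ⟨w, hw⟩,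
      Submodule.projectionOnto_apply_right hcompl ⟨w, hw⟩]
  -- extensionality on U ⊔ W
  have key : ∀ f g : Module.End k V, (∀ u ∈ U, f u = g u) → (∀ w ∈ W, f w = g w) → f = g := by
    intro f g hU hW
    ext x
    have hx : x ∈ U ⊔ W := by rw [hcompl.sup_eq_top]; trivial
    obtain ⟨u, hu, w, hw, rfl⟩ := Submodule.mem_sup.1 hx
    simp [map_add, hU u hu, hW w hw]
  -- ψ φ = id on W, φ ψ = id on W
  have hψφW : ∀ w ∈ W, ψ (φ w) = w := by
    intro w hw
    rw [hψonW _ (hWinv w hw)]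
    have : (⟨φ w, hWinv w hw⟩ : W) = e ⟨w, hw⟩ := rfl
    rw [this, LinearEquiv.symm_apply_apply]
  have hφψW : ∀ w ∈ W, φ (ψ w) = w := by
    intro w hw
    rw [hψonW _ hw]
    have : φ ↑(e.symm ⟨w, hw⟩) = ↑(e (e.symm ⟨w, hw⟩)) := rfl
    rw [this, LinearEquiv.apply_symm_apply]
  -- first condition for ψ
  have hinner : φ * ψ * φ = φ := by
    apply key
    · intro u hu
      have h1 : φ u ∈ U := hUinv u hu
      simp only [Module.End.mul_apply]
      rw [hψonU _ h1]
      have h2 : (⟨φ u, h1⟩ : U) = φU ⟨u, hu⟩ := rfl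
      have h3 : φ ↑(ψU ⟨φ u, h1⟩) = ↑(φU (ψU ⟨φ u, h1⟩)) := rfl
      rw [h3, h2, hψUkey]
      rfl
    · intro w hw
      simp only [Module.End.mul_apply]
      rw [hψφW w hw]
  have hψimU : ∀ u ∈ U, ψ u ∈ U := by
    intro u hu; rw [hψonU u hu]; exact (ψU ⟨u, hu⟩).2
  have hcomm : ψ * φ ^ r = φ ^ r * ψ := by
    apply key
    · intro u hu
      simp only [Module.End.mul_apply]
      rw [hnil u hu, map_zero, hnil _ (hψimU u hu)]
    · intro w hw
      obtain ⟨s, rfl⟩ : ∃ s, r = s + 1 := ⟨r - 1, by omega⟩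
      simp only [Module.End.mul_apply]
      have h1 : (φ ^ (s + 1)) w = (φ ^ s) (φ w) := by
        rw [pow_succ]; rfl
      have h2 : (φ ^ (s + 1)) (ψ w) = (φ ^ s) (φ (ψ w)) := by
        rw [pow_succ]; rfl
      have h3 : (φ ^ s) (φ w) = φ ((φ ^ s) w) := by
        rw [← Module.End.mul_apply, ← pow_succ, pow_succ']; rfl
      rw [h1, h3, hψφW _ (hWpow s w hw), h2, hφψW w hw]
  -- the perturbation δ
  obtain ⟨u₀, hu₀, hu₀ne⟩ := hmin (r - 1) (by omega)
  set v₀ : V := (φ ^ (r - 1)) u₀ with hv₀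
  have hv₀U : v₀ ∈ U := hUpow _ _ hu₀
  have hv₀ne : v₀ ≠ 0 := hu₀ne
  have hφv₀ : φ v₀ = 0 := by
    have : φ v₀ = (φ ^ r) u₀ := by
      rw [hv₀, ← Module.End.mul_apply, ← pow_succ']
      congr 2
      omega
    rw [this, hnil u₀ hu₀]
  obtain ⟨f, hf⟩ : ∃ f : Module.Dual k V, f v₀ ≠ 0 := by
    by_contra hcon
    push_neg at hcon
    exact hv₀ne ((Module.forall_dual_apply_eq_zero_iff k v₀).1 hcon)
  set δ : Module.End k V := (f.comp (U.subtype.comp πU)).smulRight v₀ with hδ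
  have hδapp : ∀ x, δ x = f (πU x : V) • v₀ := fun x => rfl
  have hδU : ∀ u (hu : u ∈ U), δ u = f u • v₀ := by
    intro u hu
    rw [hδapp, hπU, Submodule.projectionOnto_apply_left hcompl ⟨u, hu⟩]
  have hδW : ∀ w ∈ W, δ w = 0 := by
    intro w hw
    rw [hδapp, hπU, Submodule.projectionOnto_apply_right hcompl ⟨w, hw⟩]
    simp
  refine ⟨ψ, ψ + δ, ⟨hinner, hcomm⟩, ⟨?_, ?_⟩, ?_⟩
  · -- φ (ψ+δ) φ = φ
    have hφδ : φ * δ = 0 := by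
      ext x
      simp [Module.End.mul_apply, hδapp, hφv₀]
    calc φ * (ψ + δ) * φ = φ * ψ * φ + (φ * δ) * φ := by
          rw [mul_add, add_mul]
      _ = φ := by rw [hφδ, hinner]; simp
  · -- (ψ+δ) φ^r = φ^r (ψ+δ)
    have hδφr : δ * φ ^ r = 0 := by
      ext x
      have hx : x ∈ U ⊔ W := by rw [hcompl.sup_eq_top]; trivial
      obtain ⟨u, hu, w, hw, rfl⟩ := Submodule.mem_sup.1 hx
      simp only [Module.End.mul_apply, LinearMap.zero_apply, map_add]
      rw [hnil u hu, hδW _ (hWpow r w hw)]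
      simp
    have hφrδ : φ ^ r * δ = 0 := by
      ext x
      simp only [Module.End.mul_apply, LinearMap.zero_apply, hδapp, map_smul]
      rw [hnil v₀ hv₀U, smul_zero]
    calc (ψ + δ) * φ ^ r = ψ * φ ^ r + δ * φ ^ r := add_mul _ _ _
      _ = φ ^ r * ψ + φ ^ r * δ := by rw [hδφr, hφrδ, hcomm]
      _ = φ ^ r * (ψ + δ) := (mul_add _ _ _).symm
  · -- distinct
    intro hcontra
    have : δ v₀ = 0 := by
      have := LinearMap.ext_iff.1 hcontra v₀
      simpa using this.symm
    rw [hδU _ hv₀U] at this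
    exact hv₀ne (by simpa [hf] using smul_eq_zero.1 this)
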